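/- arXiv:2305.10988 — 2 statements merged into one kernel-verified Lean document; each statement's English description precedes it below -/
import Mathlib

section
/- Milnor's Lobachevsky function Л(x) = -∫₀ˣ log|2 sin ξ| dξ is π-periodic: Л(x + π) = Л(x) for all x ∈ ℝ. -/
/-- Milnor's Lobachevsky function. -/
noncomputable def lob (x : ℝ) : ℝ := -∫ ξ in (0:ℝ)..x, Real.log |2 * Real.sin ξ|

open Real MeasureTheory intervalIntegral Set

private lemma log_int_pos {c : ℝ} (hc : 0 < c) : IntervalIntegrable Real.log volume 0 c := by
  have hg : IntervalIntegrable (fun x : ℝ => 2 * x ^ (-(1/2) : ℝ) + x) volume 0 c :=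
    ((intervalIntegral.intervalIntegrable_rpow' (by norm_num)).const_mul 2).add
      (intervalIntegrable_id)
  refine hg.mono_fun' Real.measurable_log.aestronglyMeasurable ?_
  have h : ∀ x ∈ Set.Ioc (0:ℝ) c, ‖Real.log x‖ ≤ 2 * x ^ (-(1/2) : ℝ) + x := by
    intro x hx
    have hx0 : 0 < x := hx.1
    rcases le_or_gt 1 x with h1 | h1
    · rw [Real.norm_eq_abs, abs_of_nonneg (Real.log_nonneg h1)]
      have : Real.log x ≤ x - 1 := Real.log_le_sub_one_of_pos hx0
      have hr : 0 ≤ x ^ (-(1/2) : ℝ) := Real.rpow_nonneg hx0.le _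
      nlinarith
    · rw [Real.norm_eq_abs, abs_of_nonpos (Real.log_nonpos hx0.le h1.le)]
      have key : Real.log (x ^ (-(1/2) : ℝ)) ≤ x ^ (-(1/2) : ℝ) - 1 :=
        Real.log_le_sub_one_of_pos (Real.rpow_pos_of_pos hx0 _)
      rw [Real.log_rpow hx0] at key
      nlinarith
  rw [Set.uIoc_of_le hc.le]
  exact (ae_restrict_iff' measurableSet_Ioc).2 (Filter.Eventually.of_forall h)

private lemma log_int (c : ℝ) : IntervalIntegrable Real.log volume 0 c := by
  rcases lt_trichotomy c 0 with hc | rfl | hc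
  · have h := (log_int_pos (c := -c) (by linarith))
    have h2 := (IntervalIntegrable.iff_comp_neg (f := Real.log) (a := 0) (b := -c) enorm_ne_top).mp h
    simp only [neg_zero, neg_neg] at h2
    have : (fun x : ℝ => Real.log (-x)) = Real.log := by
      funext x; exact Real.log_neg_eq_log x
    rwa [this] at h2
  · simp
  · exact log_int_pos hc

private noncomputable def fL (ξ : ℝ) : ℝ := Real.log |2 * Real.sin ξ|

private lemma fL_periodic : Function.Periodic fL π := by
  intro x; simp [fL, Real.sin_add_pi, mul_neg, abs_neg]

private lemma fL_meas : Measurable fL :=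
  Real.measurable_log.comp ((measurable_const.mul Real.measurable_sin).abs)

private lemma fL_int_half : IntervalIntegrable fL volume 0 (π/2) := by
  have hg : IntervalIntegrable (fun x : ℝ => ‖Real.log x‖ + Real.log 2) volume 0 (π/2) :=
    (log_int (π/2)).norm.add (intervalIntegrable_const)
  refine hg.mono_fun fL_meas.aestronglyMeasurable ?_
  have hpi : (0:ℝ) < π/2 := by positivity
  rw [Set.uIoc_of_le hpi.le]
  refine (ae_restrict_iff' measurableSet_Ioc).2 (Filter.Eventually.of_forall ?_)
  intro x hx
  have hx0 : 0 < x := hx.1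
  have hs0 : 0 < Real.sin x := Real.sin_pos_of_pos_of_lt_pi hx0 (by linarith [hx.2, Real.pi_pos])
  have hub : Real.sin x ≤ x := Real.sin_le hx0.le
  have hlb : 2/π * x ≤ Real.sin x := Real.mul_le_sin hx0.le hx.2
  have habs : |2 * Real.sin x| = 2 * Real.sin x := abs_of_pos (by linarith)
  have hupper : fL x ≤ Real.log x + Real.log 2 := by
    rw [fL, habs]
    calc Real.log (2 * Real.sin x) ≤ Real.log (2 * x) :=
          Real.log_le_log (by linarith) (by linarith)
      _ = Real.log x + Real.log 2 := by
          rw [Real.log_mul (by norm_num) hx0.ne', add_comm]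
  have hlower : Real.log x + Real.log (4/π) ≤ fL x := by
    rw [fL, habs]
    have h4 : (0:ℝ) < 4/π := by positivity
    have h5 : 4/π * x ≤ 2 * Real.sin x := by
      have := mul_le_mul_of_nonneg_left hlb (by norm_num : (0:ℝ) ≤ 2)
      calc 4/π * x = 2 * (2/π * x) := by ring
        _ ≤ 2 * Real.sin x := this
    calc Real.log x + Real.log (4/π) = Real.log (4/π * x) := by
          rw [Real.log_mul h4.ne' hx0.ne', add_comm]
      _ ≤ Real.log (2 * Real.sin x) := Real.log_le_log (by positivity) h5
  have hl2 : (0:ℝ) ≤ Real.log 2 := Real.log_nonneg (by norm_num)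
  have hl4 : (0:ℝ) ≤ Real.log (4/π) := by
    apply Real.log_nonneg
    rw [le_div_iff₀ Real.pi_pos]
    linarith [Real.pi_le_four]
  simp only [Real.norm_eq_abs]
  rw [abs_of_nonneg (by positivity : (0:ℝ) ≤ |Real.log x| + Real.log 2)]
  rw [abs_le]
  constructor
  · have : -|Real.log x| ≤ Real.log x := neg_abs_le _
    linarith
  · have : Real.log x ≤ |Real.log x| := le_abs_self _
    linarith

private lemma fL_int_pi : IntervalIntegrable fL volume 0 π := by
  have h2 : IntervalIntegrable fL volume (π/2) π := by
    have h := fL_int_half.comp_sub_left π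
    simp only [sub_zero] at h
    have he : (fun x => fL (π - x)) = fL := by
      funext x; simp [fL, Real.sin_pi_sub]
    rw [he] at h
    have e1 : π - π/2 = π/2 := by ring
    rw [e1] at h
    exact h.symm
  exact fL_int_half.trans h2

private lemma fL_int (a b : ℝ) : IntervalIntegrable fL volume a b := by
  have hnat : ∀ n : ℕ, IntervalIntegrable fL volume 0 (n * π) := by
    intro n
    induction n with
    | zero => simp
    | succ n ih =>
      refine ih.trans ?_
      have h := fL_int_pi.comp_sub_right (n * π)
      have he : (fun x => fL (x - n * π)) = fL := by
        funext x
        simpa using fL_periodic.sub_nat_mul_eq (x := x) n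
      rw [he] at h
      have e1 : (0:ℝ) + n * π = n * π := by ring
      have e2 : π + n * π = (n+1 : ℕ) * π := by push_cast; ring
      rw [e1, e2] at h
      exact h
  have hneg : ∀ n : ℕ, IntervalIntegrable fL volume (-(n * π)) 0 := by
    intro n
    have h := (hnat n).comp_add_right (n * π)
    have he : (fun x => fL (x + n * π)) = fL := by
      funext x
      exact fL_periodic.nat_mul n x
    rw [he] at h
    simpa using h
  obtain ⟨n, hn⟩ := exists_nat_ge (max |a| |b|)
  have hfull : IntervalIntegrable fL volume (-(n * π)) (n * π) := (hneg n).trans (hnat n)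
  refine hfull.mono_set ?_
  have hπ : (1:ℝ) ≤ π := by linarith [Real.pi_gt_three]
  have hm : max |a| |b| ≤ n * π := by
    calc max |a| |b| ≤ n := hn
      _ ≤ n * π := le_mul_of_one_le_right (Nat.cast_nonneg n) hπ
  have ha : a ∈ Set.Icc (-(n*π)) (n*π) := by
    constructor <;> [linarith [neg_abs_le a, le_max_left |a| |b|];
      linarith [le_abs_self a, le_max_left |a| |b|]]
  have hb : b ∈ Set.Icc (-(n*π)) (n*π) := by
    constructor <;> [linarith [neg_abs_le b, le_max_right |a| |b|];
      linarith [le_abs_self b, le_max_right |a| |b|]]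
  rw [Set.uIcc_of_le (by linarith [ha.1, ha.2] : -(n*π) ≤ n*π)]
  exact Set.uIcc_subset_Icc ha hb

private lemma fL_integral_pi : (∫ ξ in (0:ℝ)..π, fL ξ) = 0 := by
  -- integral over [0, 2π] equals 2I
  have h2π : (∫ ξ in (0:ℝ)..(2*π), fL ξ) = 2 * ∫ ξ in (0:ℝ)..π, fL ξ := by
    rw [← intervalIntegral.integral_add_adjacent_intervals (fL_int 0 π) (fL_int π (2*π))]
    have : (∫ ξ in π..(2*π), fL ξ) = ∫ ξ in (0:ℝ)..π, fL ξ := by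
      have h := fL_periodic.intervalIntegral_add_eq π 0
      simp only [zero_add] at h
      have e : π + π = 2*π := by ring
      rw [e] at h
      rw [h]
    rw [this]; ring
  -- substitution u = 2ξ
  have hsub : (∫ ξ in (0:ℝ)..π, fL (2*ξ)) = ∫ ξ in (0:ℝ)..π, fL ξ := by
    rw [intervalIntegral.integral_comp_mul_left fL (by norm_num : (2:ℝ) ≠ 0)]
    simp only [mul_zero, smul_eq_mul]
    rw [h2π]
    ring
  -- the cosine companion
  have hcos_int : IntervalIntegrable (fun ξ => fL (ξ + π/2)) volume 0 π := by
    have h := (fL_int (π/2) (π/2 + π)).comp_add_right (π/2)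
    have e1 : π/2 - π/2 = (0:ℝ) := by ring
    have e2 : π/2 + π - π/2 = π := by ring
    rw [e1, e2] at h
    exact h
  have hcos : (∫ ξ in (0:ℝ)..π, fL (ξ + π/2)) = ∫ ξ in (0:ℝ)..π, fL ξ := by
    rw [intervalIntegral.integral_comp_add_right fL (π/2)]
    have h := fL_periodic.intervalIntegral_add_eq (0 + π/2) 0
    simp only [zero_add] at h ⊢
    rw [show π + π/2 = π/2 + π by ring, h]
  -- duplication: fL (2ξ) = fL ξ + fL (ξ + π/2) a.e.
  have hdup : (∫ ξ in (0:ℝ)..π, fL (2*ξ)) = ∫ ξ in (0:ℝ)..π, (fL ξ + fL (ξ + π/2)) := by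
    apply intervalIntegral.integral_congr_ae
    have hnull : (volume : Measure ℝ) {x : ℝ | Real.sin x * Real.cos x = 0} = 0 := by
      have hsub : {x : ℝ | Real.sin x * Real.cos x = 0} ⊆
          (Set.range (fun n : ℤ => (n:ℝ) * π)) ∪ (Set.range (fun n : ℤ => (2*n+1) * π / 2)) := by
        intro x hx
        rcases mul_eq_zero.mp hx with h | h
        · exact Or.inl (Real.sin_eq_zero_iff.mp h)
        · obtain ⟨n, hn⟩ := Real.cos_eq_zero_iff.mp h
          exact Or.inr ⟨n, hn.symm⟩
      exact measure_mono_null hsub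
        (((Set.countable_range _).union (Set.countable_range _)).measure_zero _)
    have hae : ∀ᵐ x : ℝ, Real.sin x * Real.cos x ≠ 0 := by
      rw [ae_iff]
      convert hnull using 2
      ext x
      simp only [not_not, not_ne_iff, mul_eq_zero]
    filter_upwards [hae] with ξ hξ _
    obtain ⟨hs, hc⟩ := mul_ne_zero_iff.mp hξ
    have e1 : 2 * Real.sin (2*ξ) = (2 * Real.sin ξ) * (2 * Real.cos ξ) := by
      rw [Real.sin_two_mul]; ring
    have e2 : fL (ξ + π/2) = Real.log |2 * Real.cos ξ| := by
      rw [fL, Real.sin_add_pi_div_two]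
    rw [fL, e1, abs_mul, e2, fL]
    exact Real.log_mul (by simpa [abs_ne_zero] using hs) (by simpa [abs_ne_zero] using hc)
  have key : (∫ ξ in (0:ℝ)..π, fL (2*ξ))
      = (∫ ξ in (0:ℝ)..π, fL ξ) + ∫ ξ in (0:ℝ)..π, fL ξ := by
    rw [hdup, intervalIntegral.integral_add (fL_int 0 π) hcos_int, hcos]
  rw [key] at hsub
  linarith

/-- Milnor's Lobachevsky function is `π`-periodic. -/
theorem lob_periodic (x : ℝ) : lob (x + Real.pi) = lob x := by
  have hsplit : (∫ ξ in (0:ℝ)..(x + π), fL ξ)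
      = (∫ ξ in (0:ℝ)..x, fL ξ) + ∫ ξ in x..(x + π), fL ξ :=
    (intervalIntegral.integral_add_adjacent_intervals (fL_int 0 x) (fL_int x (x+π))).symm
  have hper : (∫ ξ in x..(x + π), fL ξ) = ∫ ξ in (0:ℝ)..π, fL ξ := by
    have h := fL_periodic.intervalIntegral_add_eq x 0
    simpa using h
  have : (∫ ξ in (0:ℝ)..(x + π), fL ξ) = ∫ ξ in (0:ℝ)..x, fL ξ := by
    rw [hsplit, hper, fL_integral_pi, add_zero]
  simpa [lob, fL] using congrArg Neg.neg this
end

section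
/- Milnor's Lobachevsky function Л is continuous on ℝ and differentiable at every x that is not an integer multiple of π, with derivative Л'(x) = -log|2 sin x|. -/
open Real MeasureTheory Set intervalIntegral

noncomputable def flog (ξ : ℝ) : ℝ := Real.log |2 * Real.sin ξ|

lemma flog_meas : Measurable flog :=
  Real.measurable_log.comp ((continuous_abs.comp
    (continuous_const.mul Real.continuous_sin)).measurable)

/-- log is interval integrable on [0,1]. -/
lemma II_log01 : IntervalIntegrable Real.log volume 0 1 := by
  have hderiv : ∀ x ∈ Ioo (0:ℝ) 1, HasDerivAt (fun x => x - x * Real.log x)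
      (-Real.log x) x := by
    intro x hx
    have h := (hasDerivAt_id x).sub (Real.hasDerivAt_mul_log (ne_of_gt hx.1))
    exact h.congr_deriv (by ring)
  have hcont : ContinuousOn (fun x : ℝ => x - x * Real.log x) (Icc 0 1) :=
    (continuous_id.sub Real.continuous_mul_log).continuousOn
  have hpos : ∀ x ∈ Ioo (0:ℝ) 1, 0 ≤ -Real.log x := by
    intro x hx
    simp only [neg_nonneg]
    exact Real.log_nonpos hx.1.le hx.2.le
  have h := intervalIntegral.integrableOn_deriv_of_nonneg hcont hderiv hpos
  have h2 : IntegrableOn Real.log (Ioc 0 1) volume := integrable_neg_iff.mp h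
  exact (intervalIntegrable_iff_integrableOn_Ioc_of_le (by norm_num)).2 h2

lemma II_log0b {b : ℝ} (hb : 1 ≤ b) : IntervalIntegrable Real.log volume 0 b := by
  refine II_log01.trans ?_
  apply ContinuousOn.intervalIntegrable
  apply Real.continuousOn_log.mono
  intro x hx
  simp only [Set.uIcc_of_le hb, Set.mem_Icc] at hx
  simp only [Set.mem_compl_iff, Set.mem_singleton_iff]
  intro h; rw [h] at hx; linarith [hx.1]

/-- flog is interval integrable on [0, π/2]. -/
lemma II_flog_half : IntervalIntegrable flog volume 0 (π / 2) := by
  have h1 : (1:ℝ) ≤ π / 2 := by linarith [Real.pi_gt_three]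
  have hlog : IntervalIntegrable Real.log volume 0 (π / 2) := II_log0b h1
  have hg : IntervalIntegrable (fun x => |Real.log x| + Real.log 2) volume 0 (π / 2) :=
    hlog.abs.add (intervalIntegrable_const)
  rw [intervalIntegrable_iff_integrableOn_Ioc_of_le (by linarith)] at hg ⊢
  refine hg.integrable.mono flog_meas.aestronglyMeasurable ?_
  filter_upwards [ae_restrict_mem measurableSet_Ioc] with x hx
  have hx0 : 0 < x := hx.1
  have hx2 : x ≤ π / 2 := hx.2
  have hs : 0 < Real.sin x := Real.sin_pos_of_pos_of_lt_pi hx0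
    (lt_of_le_of_lt hx2 (by linarith [Real.pi_pos]))
  have habs : |2 * Real.sin x| = 2 * Real.sin x := abs_of_pos (by linarith)
  have hjordan := Real.mul_le_sin hx0.le hx2
  have h2x : 2 * x ≤ π * Real.sin x := by
    rw [div_mul_eq_mul_div, div_le_iff₀ Real.pi_pos] at hjordan
    linarith [hjordan]
  have hlow : x ≤ 2 * Real.sin x := by
    nlinarith [mul_nonneg (by linarith [Real.pi_le_four] : (0:ℝ) ≤ 4 - π) hs.le]
  have hup : 2 * Real.sin x ≤ 2 := by nlinarith [Real.sin_le_one x]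
  have hL : Real.log x ≤ flog x := by
    rw [flog, habs]; exact Real.log_le_log hx0 hlow
  have hU : flog x ≤ Real.log 2 := by
    rw [flog, habs]; exact Real.log_le_log (by linarith) hup
  have hlog2 : (0:ℝ) ≤ Real.log 2 := Real.log_nonneg (by norm_num)
  have habsn : (0:ℝ) ≤ |Real.log x| := abs_nonneg _
  rw [Real.norm_eq_abs, Real.norm_eq_abs]
  rw [abs_of_nonneg (by positivity : (0:ℝ) ≤ |Real.log x| + Real.log 2)]
  rw [abs_le]
  refine ⟨?_, ?_⟩
  · have := neg_abs_le (Real.log x); linarith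
  · linarith

lemma II_flog_pi : IntervalIntegrable flog volume 0 π := by
  refine II_flog_half.trans ?_
  have h := II_flog_half.comp_sub_left π
  have heq : (fun x => flog (π - x)) = flog := by
    funext x
    simp only [flog, Real.sin_pi_sub]
  rw [heq, show π - 0 = π by ring, show π - π/2 = π/2 by ring] at h
  exact h.symm

lemma II_flog_step (n : ℤ) : IntervalIntegrable flog volume (n * π) (n * π + π) := by
  have h := II_flog_pi.comp_sub_right (n * π)
  have heq : (fun x => flog (x - n * π)) = flog := by
    funext x
    have e : x - (n:ℝ) * π = x + ((-n : ℤ) : ℝ) * π := by push_cast; ring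
    simp only [flog, e, Real.sin_add_int_mul_pi]
    congr 1
    rcases Int.even_or_odd (-n) with he | ho
    · rw [he.neg_one_zpow, one_mul]
    · rw [ho.neg_one_zpow, show (2:ℝ) * (-1 * Real.sin x) = -(2 * Real.sin x) by ring, abs_neg]
  rw [heq, show (0:ℝ) + n * π = n * π by ring, show π + (n:ℝ) * π = n * π + π by ring] at h
  exact h

lemma II_flog_nat (N : ℕ) : IntervalIntegrable flog volume (-(N * π)) (N * π) := by
  induction N with
  | zero => simp
  | succ n ih =>
    have h1 : IntervalIntegrable flog volume (-((n+1) * π)) (-((n:ℝ) * π)) := by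
      have h := II_flog_step (-(n+1))
      rw [show ((-(n+1) : ℤ) : ℝ) * π = -(((n:ℝ)+1) * π) by push_cast; ring] at h
      rw [show -(((n:ℝ)+1) * π) + π = -((n:ℝ) * π) by ring] at h
      exact h
    have h2 : IntervalIntegrable flog volume ((n:ℝ) * π) (((n:ℝ)+1) * π) := by
      have h := II_flog_step n
      rw [show ((n : ℤ) : ℝ) * π = (n:ℝ) * π by push_cast; ring] at h
      rw [show (n:ℝ) * π + π = ((n:ℝ)+1) * π by ring] at h
      exact h
    have h3 := (h1.trans ih).trans h2
    push_cast
    exact h3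

lemma II_flog (a b : ℝ) : IntervalIntegrable flog volume a b := by
  obtain ⟨N, hN⟩ := exists_nat_gt (max |a| |b|)
  have hNpi : max |a| |b| ≤ N * π := by
    nlinarith [Real.pi_gt_three, le_max_left |a| |b|, abs_nonneg a, hN.le]
  apply (II_flog_nat N).mono_set
  rw [Set.uIcc_of_le (by nlinarith [abs_nonneg a, le_max_left |a| |b|] : -((N:ℝ)*π) ≤ ((N:ℝ)*π))]
  refine Set.uIcc_subset_Icc ⟨?_, ?_⟩ ⟨?_, ?_⟩
  · have := neg_abs_le a; have := le_max_left |a| |b|; linarith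
  · have := le_abs_self a; have := le_max_left |a| |b|; linarith
  · have := neg_abs_le b; have := le_max_right |a| |b|; linarith
  · have := le_abs_self b; have := le_max_right |a| |b|; linarith

/-- Milnor's Lobachevsky function is continuous on `ℝ` and differentiable away from
integer multiples of `π`, with derivative `-log |2 sin x|`. -/
theorem lob_continuous_and_differentiable :
    Continuous lob
    ∧ ∀ x : ℝ, (∀ n : ℤ, x ≠ n * Real.pi) →
        HasDerivAt lob (-(Real.log |2 * Real.sin x|)) x := by
  have hF : Continuous (fun x : ℝ => ∫ ξ in (0:ℝ)..x, flog ξ) :=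
    intervalIntegral.continuous_primitive (fun a b => II_flog a b) 0
  have hlobeq : lob = fun x => -∫ ξ in (0:ℝ)..x, flog ξ := rfl
  constructor
  · rw [hlobeq]; exact hF.neg
  · intro x hx
    have hsin : Real.sin x ≠ 0 := by
      rw [Real.sin_ne_zero_iff]
      intro n
      exact fun h => hx n h.symm
    have hne : |2 * Real.sin x| ≠ 0 := by
      simp only [ne_eq, abs_eq_zero]
      intro h
      rcases mul_eq_zero.1 h with h | h
      · norm_num at h
      · exact hsin h
    have hcont : ContinuousAt flog x := by
      show ContinuousAt (fun ξ => Real.log |2 * Real.sin ξ|) x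
      have hg : ContinuousAt (fun ξ : ℝ => |2 * Real.sin ξ|) x :=
        (continuous_const.mul Real.continuous_sin).abs.continuousAt
      exact ContinuousAt.comp (f := fun ξ : ℝ => |2 * Real.sin ξ|) (Real.continuousAt_log hne) hg
    have hd : HasDerivAt (fun u => ∫ ξ in (0:ℝ)..u, flog ξ) (flog x) x :=
      intervalIntegral.integral_hasDerivAt_right (II_flog 0 x)
        flog_meas.stronglyMeasurable.stronglyMeasurableAtFilter hcont
    rw [hlobeq]
    exact hd.neg
end
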